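/- Let $d \geq 2$ and $a > 0$. Let $\widetilde\Gamma$ be the $d\times d$ symmetric tridiagonal matrix with diagonal $[a,\,1+2a,\,\dots,\,1+2a,\,1+a]$ (first entry $a$, last entry $1+a$, all middle entries $1+2a$) and with all subdiagonal and superdiagonal entries equal to $-\sqrt{a(1+a)}$. Then $\widetilde\Gamma$ is positive semidefinite and its kernel is exactly the one-dimensional span of the vector $v = (1, \sqrt{a/(1+a)}, (a/(1+a)), \dots, (a/(1+a))^{(d-1)/2})$, i.e. $v_j = (a/(1+a))^{j/2}$ for $j=0,\dots,d-1$. -/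

import Mathlib

open Matrix Finset

noncomputable def Ent (a s : ℝ) (d : ℕ) (i j : ℕ) : ℝ :=
  (if j = i then (if i = 0 then a else if i = d - 1 then 1 + a else 1 + 2 * a) else 0)
  + (if j = i + 1 then -s else 0) + (if i = j + 1 then -s else 0)

lemma qf_nat (a s : ℝ) (m : ℕ) (y : ℕ → ℝ) (hy : ∀ n, m + 2 ≤ n → y n = 0) :
    ∑ i ∈ range (m+2), ∑ j ∈ range (m+2), y i * (Ent a s (m+2) i j * y j)
      = ∑ k ∈ range (m+1),
          ((1+a) * (y (k+1) * y (k+1)) + a * (y k * y k) - 2*s*(y k * y (k+1))) := by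
  have hmm : m + 2 - 1 = m + 1 := rfl
  have inner : ∀ i ∈ range (m+2),
      ∑ j ∈ range (m+2), y i * (Ent a s (m+2) i j * y j)
        = (if i = 0 then 0 else (1+a)) * (y i * y i)
          + (if i = m+1 then 0 else a) * (y i * y i)
          + y i * (-s * y (i+1))
          + (if i = 0 then 0 else y i * (-s * y (i-1))) := by
    intro i hi
    rw [mem_range] at hi
    have split : ∀ j, y i * (Ent a s (m+2) i j * y j)
        = (if j = i then y i * ((if i = 0 then a else if i = m+1 then 1 + a else 1 + 2*a) * y j) else 0)
          + (if j = i + 1 then y i * (-s * y j) else 0)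
          + (if i = j + 1 then y i * (-s * y j) else 0) := by
      intro j
      unfold Ent
      rw [hmm]
      split_ifs <;> ring
    rw [sum_congr rfl (fun j _ => split j), sum_add_distrib, sum_add_distrib,
      Finset.sum_ite_eq' (range (m+2)) i, if_pos (mem_range.mpr hi),
      Finset.sum_ite_eq' (range (m+2)) (i+1)]
    have h2 : (if i + 1 ∈ range (m+2) then y i * (-s * y (i+1)) else 0)
        = y i * (-s * y (i+1)) := by
      split_ifs with h
      · rfl
      · rw [hy (i+1) (by rw [mem_range] at h; omega)]; ring
    have h3 : ∑ j ∈ range (m+2), (if i = j + 1 then y i * (-s * y j) else 0)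
        = (if i = 0 then 0 else y i * (-s * y (i-1))) := by
      rcases Nat.eq_zero_or_pos i with h0 | h0
      · subst h0
        rw [if_pos rfl]
        exact Finset.sum_eq_zero fun j _ => by rw [if_neg (by omega)]
      · obtain ⟨n, rfl⟩ : ∃ n, i = n + 1 := ⟨i - 1, by omega⟩
        have : ∀ j, (n + 1 = j + 1) = (j = n) := fun j => by
          simp only [eq_iff_iff]; omega
        simp only [this]
        rw [Finset.sum_ite_eq' (range (m+2)) n, if_pos (mem_range.mpr (by omega)),
          if_neg (by omega)]
        simp
    rw [h2, h3]
    have hd : y i * ((if i = 0 then a else if i = m+1 then 1 + a else 1 + 2*a) * y i)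
        = (if i = 0 then 0 else (1+a)) * (y i * y i) + (if i = m+1 then 0 else a) * (y i * y i) := by
      have : i = 0 → ¬ (i = m+1) := by omega
      split_ifs <;> first | ring1 | (exfalso; omega)
    rw [hd]
  rw [sum_congr rfl inner]
  simp only [sum_add_distrib]
  have e1 : ∑ i ∈ range (m+2), (if i = 0 then (0:ℝ) else (1+a)) * (y i * y i)
      = ∑ k ∈ range (m+1), (1+a) * (y (k+1) * y (k+1)) := by
    rw [Finset.sum_range_succ']
    simp
  have e2 : ∑ i ∈ range (m+2), (if i = m+1 then (0:ℝ) else a) * (y i * y i)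
      = ∑ k ∈ range (m+1), a * (y k * y k) := by
    rw [Finset.sum_range_succ, if_pos rfl]
    rw [sum_congr rfl fun k hk => by rw [if_neg (by rw [mem_range] at hk; omega)]]
    simp
  have e3 : ∑ i ∈ range (m+2), y i * (-s * y (i+1))
      = ∑ k ∈ range (m+1), y k * (-s * y (k+1)) := by
    rw [Finset.sum_range_succ, hy (m+2) le_rfl]
    simp
  have e4 : ∑ i ∈ range (m+2), (if i = 0 then (0:ℝ) else y i * (-s * y (i-1)))
      = ∑ k ∈ range (m+1), y (k+1) * (-s * y k) := by
    rw [Finset.sum_range_succ']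
    simp
  rw [e1, e2, e3, e4, ← sum_add_distrib, ← sum_add_distrib, ← sum_add_distrib]
  exact sum_congr rfl fun k _ => by ring

/-- The tridiagonal level-shift matrix `Γ̃` with diagonal `[a, 1+2a, …, 1+2a, 1+a]` and
off-diagonal entries `-√(a(1+a))` is positive semidefinite, and its kernel is exactly
the span of the vector `v` with `v j = (a/(1+a))^(j/2)`. -/
theorem stmt1 (d : ℕ) (hd : 2 ≤ d) (a : ℝ) (ha : 0 < a) :
    let Γ : Matrix (Fin d) (Fin d) ℝ := fun i j =>
      if i = j then
        (if (i : ℕ) = 0 then a else if (i : ℕ) = d - 1 then 1 + a else 1 + 2 * a)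
      else if (i : ℕ) = (j : ℕ) + 1 ∨ (j : ℕ) = (i : ℕ) + 1 then
        -Real.sqrt (a * (1 + a))
      else 0
    let v : Fin d → ℝ := fun j => Real.sqrt (a / (1 + a)) ^ (j : ℕ)
    Γ.PosSemidef ∧ (∀ x : Fin d → ℝ, Γ.mulVec x = 0 ↔ ∃ c : ℝ, x = c • v) := by
  intro Γ v
  obtain ⟨m, rfl⟩ : ∃ m, d = m + 2 := ⟨d - 2, by omega⟩
  have h1a : (0:ℝ) < 1 + a := by linarith
  set t := Real.sqrt a with htdef
  set u := Real.sqrt (1+a) with hudef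
  set s := Real.sqrt (a*(1+a)) with hsdef
  set r := Real.sqrt (a/(1+a)) with hrdef
  have hu0 : 0 < u := Real.sqrt_pos.mpr h1a
  have ht0 : 0 < t := Real.sqrt_pos.mpr ha
  have hu2 : u^2 = 1+a := Real.sq_sqrt h1a.le
  have ht2 : t^2 = a := Real.sq_sqrt ha.le
  have hsut : s = t * u := by rw [hsdef, htdef, hudef, Real.sqrt_mul ha.le]
  have hrtu : r = t / u := by rw [hrdef, htdef, hudef, Real.sqrt_div ha.le]
  have hur : u * r = t := by rw [hrtu]; field_simp
  have hvj : ∀ j : Fin (m+2), v j = r ^ (j:ℕ) := fun j => rfl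
  have hΓE : ∀ i j : Fin (m+2), Γ i j = Ent a s (m+2) (i:ℕ) (j:ℕ) := by
    intro i j
    show (if i = j then _ else _) = _
    unfold Ent
    by_cases hij : i = j
    · subst hij
      rw [if_pos rfl, if_pos rfl]
      have hne : ¬((i:ℕ) = (i:ℕ)+1) := by omega
      rw [if_neg hne]
      ring
    · have hij' : ¬((j:ℕ) = (i:ℕ)) := fun h => hij (Fin.ext h.symm)
      rw [if_neg hij, if_neg hij']
      by_cases h2 : (j:ℕ) = (i:ℕ)+1
      · rw [if_pos (Or.inr h2), if_pos h2, if_neg (by omega)]; ring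
      · by_cases h3 : (i:ℕ) = (j:ℕ)+1
        · rw [if_pos (Or.inl h3), if_neg h2, if_pos h3]; ring
        · rw [if_neg (by tauto), if_neg h2, if_neg h3]; ring
  have key : ∀ x : Fin (m+2) → ℝ, ∀ y : ℕ → ℝ,
      (∀ n (hn : n < m+2), y n = x ⟨n, hn⟩) → (∀ n, m+2 ≤ n → y n = 0) →
      x ⬝ᵥ Γ.mulVec x = ∑ k ∈ range (m+1), (u * y (k+1) - t * y k)^2 := by
    intro x y hy1 hy2
    have e1 : x ⬝ᵥ Γ.mulVec x
        = ∑ i ∈ range (m+2), ∑ j ∈ range (m+2), y i * (Ent a s (m+2) i j * y j) := by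
      calc x ⬝ᵥ Γ.mulVec x
          = ∑ i : Fin (m+2), ∑ j : Fin (m+2),
              y (i:ℕ) * (Ent a s (m+2) (i:ℕ) (j:ℕ) * y (j:ℕ)) := by
            simp only [dotProduct, mulVec, Finset.mul_sum]
            refine sum_congr rfl fun i _ => sum_congr rfl fun j _ => ?_
            rw [hy1 _ i.isLt, hy1 _ j.isLt, Fin.eta, Fin.eta, hΓE]
        _ = ∑ i : Fin (m+2), ∑ j ∈ range (m+2),
              y (i:ℕ) * (Ent a s (m+2) (i:ℕ) j * y j) :=
            sum_congr rfl fun i _ =>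
              Fin.sum_univ_eq_sum_range
                (fun n => y (i:ℕ) * (Ent a s (m+2) (i:ℕ) n * y n)) _
        _ = ∑ i ∈ range (m+2), ∑ j ∈ range (m+2), y i * (Ent a s (m+2) i j * y j) :=
            Fin.sum_univ_eq_sum_range
              (fun n => ∑ j ∈ range (m+2), y n * (Ent a s (m+2) n j * y j)) _
    rw [e1, qf_nat a s m y hy2]
    refine sum_congr rfl fun k _ => ?_
    have expand : (u * y (k+1) - t * y k)^2
        = u^2 * (y (k+1) * y (k+1)) + t^2 * (y k * y k) - 2*(t*u)*(y k * y (k+1)) := by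
      ring
    rw [expand, hu2, ht2, ← hsut]
  have hherm : Γ.IsHermitian := by
    have hEsymm : ∀ i j : ℕ, Ent a s (m+2) i j = Ent a s (m+2) j i := by
      intro i j
      unfold Ent
      by_cases h : i = j
      · subst h; rfl
      · rw [if_neg h, if_neg (fun hh => h (id hh.symm : i = j))]
        ring
    ext i j
    simp only [conjTranspose_apply, star_trivial]
    rw [hΓE, hΓE, hEsymm]
  have hPSD : Γ.PosSemidef := by
    refine posSemidef_iff_dotProduct_mulVec.mpr ⟨hherm, fun x => ?_⟩
    have hst : star x = x := funext fun i => star_trivial _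
    rw [hst, key x (fun n => if h : n < m+2 then x ⟨n,h⟩ else 0)
      (fun n hn => by
        show (if h : n < m+2 then x ⟨n,h⟩ else 0) = x ⟨n, hn⟩
        rw [dif_pos hn])
      (fun n hn => by
        show (if h : n < m+2 then x ⟨n,h⟩ else 0) = 0
        rw [dif_neg (by omega)])]
    exact sum_nonneg fun k _ => sq_nonneg _
  refine ⟨hPSD, fun x => ⟨fun hx => ?_, ?_⟩⟩
  · -- forward: kernel → multiple of v
    set y : ℕ → ℝ := fun n => if h : n < m+2 then x ⟨n,h⟩ else 0 with hy
    have hyn : ∀ n (hn : n < m+2), y n = x ⟨n, hn⟩ := by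
      intro n hn
      show (if h : n < m+2 then x ⟨n,h⟩ else 0) = x ⟨n, hn⟩
      rw [dif_pos hn]
    have hyz : ∀ n, m+2 ≤ n → y n = 0 := by
      intro n hn
      show (if h : n < m+2 then x ⟨n,h⟩ else 0) = 0
      rw [dif_neg (by omega)]
    have h0 : ∑ k ∈ range (m+1), (u * y (k+1) - t * y k)^2 = 0 := by
      rw [← key x y hyn hyz, hx, dotProduct_zero]
    have hz := (sum_eq_zero_iff_of_nonneg (fun k _ => sq_nonneg _)).mp h0
    have hrec : ∀ k, k < m+1 → y (k+1) = r * y k := by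
      intro k hk
      have h1 : (u * y (k+1) - t * y k)^2 = 0 := hz k (mem_range.mpr hk)
      have h2 : u * y (k+1) - t * y k = 0 := by
        have := sq_eq_zero_iff.mp h1
        exact this
      have h3 : u * y (k+1) = u * (r * y k) := by
        rw [← mul_assoc, hur]; linarith
      exact mul_left_cancel₀ hu0.ne' h3
    have hval : ∀ n, n < m+2 → y n = y 0 * r ^ n := by
      intro n
      induction n with
      | zero => intro _; simp
      | succ k ih =>
        intro hk
        rw [hrec k (by omega), ih (by omega)]
        ring
    refine ⟨x ⟨0, Nat.succ_pos _⟩, funext fun j => ?_⟩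
    have hy0 : y 0 = x ⟨0, Nat.succ_pos _⟩ := hyn 0 (Nat.succ_pos _)
    have hyj : y (j:ℕ) = x j := by
      rw [hyn _ j.isLt]
    calc x j = y (j:ℕ) := hyj.symm
      _ = y 0 * r ^ (j:ℕ) := hval _ j.isLt
      _ = x ⟨0, Nat.succ_pos _⟩ * r ^ (j:ℕ) := by rw [hy0]
      _ = (x ⟨0, Nat.succ_pos _⟩ • v) j := by rw [Pi.smul_apply, smul_eq_mul, hvj]
  · -- backward
    rintro ⟨c, rfl⟩
    rw [← hPSD.dotProduct_mulVec_zero_iff]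
    have hst : star (c • v) = c • v := funext fun i => star_trivial _
    rw [hst]
    rw [key (c • v) (fun n => if h : n < m+2 then c * r ^ n else 0)
      (fun n hn => by
        show (if h : n < m+2 then c * r ^ n else 0) = (c • v) ⟨n, hn⟩
        rw [dif_pos hn, Pi.smul_apply, smul_eq_mul, hvj])
      (fun n hn => by
        show (if h : n < m+2 then c * r ^ n else 0) = 0
        rw [dif_neg (by omega)])]
    refine sum_eq_zero fun k hk => ?_
    rw [mem_range] at hk
    show (u * (if h : k+1 < m+2 then c * r ^ (k+1) else 0)
        - t * (if h : k < m+2 then c * r ^ k else 0))^2 = 0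
    rw [dif_pos (by omega : k + 1 < m+2), dif_pos (by omega : k < m+2)]
    have : u * (c * r ^ (k+1)) - t * (c * r ^ k) = c * r ^ k * (u * r - t) := by ring
    rw [this, hur, sub_self, mul_zero]
    norm_num
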